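/- Let {P_n}_{n≥0} be a monic PS and, for k ≥ 1, define P^{[0]}_n := P_n and P^{[k]}_n := (n+1)^{-1} D_ω P^{[k−1]}_{n+1}. Suppose that for every k ≥ 0 the monic PS {P^{[k]}_n}_{n≥0} satisfies the three-term recurrence with coefficients (β^{[k]}_n), (γ^{[k]}_{n+1}), and that γ_m := γ^{[0]}_m ≠ 0 for all m ≥ 1. Define δ_n := β^{[1]}_n − β_{n+1} for n ≥ 0 and θ_n := (n+1)γ^{[1]}_n/(n γ_{n+1}) for n ≥ 1 (where β_n := β^{[0]}_n), and for k ≥ 1 set α^{k,1}_n := (n+1)(β^{[k−1]}_{n+1} − β^{[k]}_n − ω) and α^{k,0}_n := (n+1)γ^{[k−1]}_{n+2} − (n+2)γ^{[k]}_{n+1}. Then for every k ≥ 1 and every n ≥ 0: α^{k,1}_n = −(n+1)(δ_{n+k−1} + ω) and α^{k,0}_n = ((n+1)(n+2)/(n+k+1))·γ_{n+k+1}·(1 − θ_{n+k}). -/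

import Mathlib

open Polynomial

/-- The Hahn difference operator `D_ω` acting on polynomials:
`(D_ω f)(x) = (f(x+ω) − f(x))/ω`. -/
noncomputable def Dw (ω : ℂ) (f : Polynomial ℂ) : Polynomial ℂ :=
  C ω⁻¹ * (f.comp (X + C ω) - f)

/-- A monic polynomial sequence: each `P n` is monic of degree `n`. -/
def MonicPS (P : ℕ → Polynomial ℂ) : Prop :=
  ∀ n, (P n).Monic ∧ (P n).natDegree = n

/-- Three-term recurrence with coefficients `β`, `γ` (where `γ (n+1)` is used). -/
def TTR (P : ℕ → Polynomial ℂ) (β γ : ℕ → ℂ) : Prop :=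
  P 0 = 1 ∧ P 1 = X - C (β 0) ∧
    ∀ n : ℕ, P (n + 2) = (X - C (β (n + 1))) * P (n + 1) - C (γ (n + 1)) * P n

/-- Orthogonality of a polynomial sequence with respect to a linear functional. -/
def IsOPSwrt (P : ℕ → Polynomial ℂ) (u : Polynomial ℂ →ₗ[ℂ] ℂ) : Prop :=
  (∀ n m, n ≠ m → u (P n * P m) = 0) ∧ ∀ n, u (P n * P n) ≠ 0

noncomputable def sub1 (P : ℕ → Polynomial ℂ) (n : ℕ) : ℂ :=
  if n = 0 then 0 else (P n).coeff (n - 1)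

noncomputable def sub2 (P : ℕ → Polynomial ℂ) (n : ℕ) : ℂ :=
  if n ≤ 1 then 0 else (P n).coeff (n - 2)

lemma beta_eq {P : ℕ → Polynomial ℂ} {β γ : ℕ → ℂ} (hm : MonicPS P) (h : TTR P β γ) :
    ∀ n, β n = sub1 P n - sub1 P (n + 1) := by
  obtain ⟨h0, h1, h2⟩ := h
  intro n
  match n with
  | 0 => simp [sub1, h1]
  | n + 1 =>
    have hs2 : sub1 P (n + 2) = (P (n + 2)).coeff (n + 1) := by simp [sub1]
    have hs1 : sub1 P (n + 1) = (P (n + 1)).coeff n := by simp [sub1]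
    rw [hs1, hs2, h2 n]
    have hmon : (P (n + 1)).coeff (n + 1) = 1 := by
      have := (hm (n + 1)).1.coeff_natDegree
      rwa [(hm (n + 1)).2] at this
    have hz : (P n).coeff (n + 1) = 0 :=
      coeff_eq_zero_of_natDegree_lt (by rw [(hm n).2]; omega)
    rw [sub_mul, coeff_sub, coeff_sub, coeff_X_mul, coeff_C_mul, coeff_C_mul, hmon, hz]
    ring

lemma gamma_eq {P : ℕ → Polynomial ℂ} {β γ : ℕ → ℂ} (hm : MonicPS P) (h : TTR P β γ) :
    ∀ n, γ (n + 1) = sub2 P (n + 1) - sub2 P (n + 2) - β (n + 1) * sub1 P (n + 1) := by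
  obtain ⟨h0, h1, h2⟩ := h
  intro n
  match n with
  | 0 =>
    have e2 : P 2 = (X - C (β 1)) * P 1 - C (γ 1) * P 0 := h2 0
    simp only [sub2, sub1]
    norm_num
    rw [e2, h1, h0]
    simp [coeff_sub, coeff_C_mul, coeff_zero_eq_eval_zero]
  | n + 1 =>
    have hs3 : sub2 P (n + 3) = (P (n + 3)).coeff (n + 1) := by simp [sub2]
    have hs2 : sub2 P (n + 2) = (P (n + 2)).coeff n := by simp [sub2]
    have hs1 : sub1 P (n + 2) = (P (n + 2)).coeff (n + 1) := by simp [sub1]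
    rw [hs1, hs2, hs3, h2 (n + 1)]
    have hmon : (P (n + 1)).coeff (n + 1) = 1 := by
      have := (hm (n + 1)).1.coeff_natDegree
      rwa [(hm (n + 1)).2] at this
    rw [sub_mul, coeff_sub, coeff_sub, coeff_X_mul, coeff_C_mul, coeff_C_mul, hmon]
    ring

lemma tcoeff (ω : ℂ) (f : Polynomial ℂ) (n d : ℕ) (h : f.natDegree ≤ n + d) :
    (Polynomial.taylor ω f).coeff n
      = ∑ i ∈ Finset.range (d + 1), ((i + n).choose n : ℂ) * ω ^ i * f.coeff (i + n) := by
  rw [Polynomial.taylor_coeff]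
  rw [Polynomial.eval_eq_sum_range' (n := d + 1)
    (lt_of_le_of_lt (Polynomial.natDegree_hasseDeriv_le f n) (by omega))]
  refine Finset.sum_congr rfl fun i _ => ?_
  rw [Polynomial.hasseDeriv_coeff]
  ring

lemma choose2C (m : ℕ) : ((m + 2).choose 2 : ℂ) * 2 = (m + 2) * (m + 1) := by
  have h1 := Nat.add_one_mul_choose_eq (m + 1) 1
  rw [Nat.choose_one_right] at h1
  simp only [Nat.succ_eq_add_one, show m + 1 + 1 = m + 2 by omega,
    show (1 : ℕ) + 1 = 2 by omega] at h1
  have h1c := congrArg (Nat.cast : ℕ → ℂ) h1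
  push_cast at h1c
  linear_combination -h1c

lemma choose3C (m : ℕ) : ((m + 3).choose 3 : ℂ) * 6 = (m + 3) * (m + 2) * (m + 1) := by
  have h2 := Nat.add_one_mul_choose_eq (m + 2) 2
  simp only [Nat.succ_eq_add_one, show m + 2 + 1 = m + 3 by omega,
    show (2 : ℕ) + 1 = 3 by omega] at h2
  have h2c := congrArg (Nat.cast : ℕ → ℂ) h2
  push_cast at h2c
  linear_combination (↑m + 3) * choose2C m - 2 * h2c

/-- coefficient of `Dw ω f` below top, given the three top coefficients of `f`. -/
lemma dw_coeff (ω : ℂ) (hω : ω ≠ 0) (f : Polynomial ℂ) (m d : ℕ) (h : f.natDegree ≤ m + d) :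
    (Dw ω f).coeff m
      = ω⁻¹ * (∑ i ∈ Finset.range (d + 1), ((i + m).choose m : ℂ) * ω ^ i * f.coeff (i + m)
          - f.coeff m) := by
  rw [Dw, coeff_C_mul, coeff_sub, ← Polynomial.taylor_apply, tcoeff ω f m d h]

lemma R1 {ω : ℂ} (hω : ω ≠ 0) {Pk : ℕ → ℕ → Polynomial ℂ}
    (hmonic : ∀ k n, (Pk k n).Monic ∧ (Pk k n).natDegree = n)
    (hrec : ∀ k n : ℕ, Pk (k + 1) n = ((n : ℂ) + 1)⁻¹ • Dw ω (Pk k (n + 1))) :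
    ∀ k n : ℕ, ((n : ℂ) + 1) * sub1 (Pk (k + 1)) n
      = (n : ℂ) * sub1 (Pk k) (n + 1) + ((n : ℂ) * ((n : ℂ) + 1) / 2) * ω := by
  intro k n
  match n with
  | 0 => simp [sub1]
  | m + 1 =>
    have hs : sub1 (Pk (k + 1)) (m + 1) = (Pk (k + 1) (m + 1)).coeff m := by simp [sub1]
    have hs' : sub1 (Pk k) (m + 2) = (Pk k (m + 2)).coeff (m + 1) := by simp [sub1]
    have hdeg : (Pk k (m + 2)).natDegree ≤ m + 2 := le_of_eq (hmonic k (m + 2)).2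
    have htop : (Pk k (m + 2)).coeff (m + 2) = 1 := by
      have := (hmonic k (m + 2)).1.coeff_natDegree
      rwa [(hmonic k (m + 2)).2] at this
    have hc1 : ((m + 1).choose m : ℂ) = (m : ℂ) + 1 := by
      rw [Nat.choose_succ_self_right]; push_cast; ring
    have hc2 : ((m + 2).choose m : ℂ) = ((m : ℂ) + 2) * ((m : ℂ) + 1) / 2 := by
      have hsym : (m + 2).choose m = (m + 2).choose 2 := by
        rw [← Nat.choose_symm (show 2 ≤ m + 2 by omega), Nat.add_sub_cancel]
      rw [hsym, eq_div_iff (two_ne_zero)]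
      exact choose2C m
    rw [hs, hrec k (m + 1), coeff_smul,
      dw_coeff ω hω _ m 2 (by rw [(hmonic k (m + 1 + 1)).2])]
    rw [Finset.sum_range_succ, Finset.sum_range_succ, Finset.sum_range_succ,
      Finset.sum_range_zero]
    simp only [show m + 1 + 1 = m + 2 by omega, show 0 + m = m by omega,
      show 1 + m = m + 1 by omega, show 2 + m = m + 2 by omega,
      Nat.choose_self, Nat.cast_one, pow_zero, pow_one, smul_eq_mul]
    rw [hc1, hc2, htop, hs']
    have h2 : ((m : ℂ) + 2) ≠ 0 := by
      have : ((m + 2 : ℕ) : ℂ) ≠ 0 := Nat.cast_ne_zero.mpr (by omega)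
      push_cast at this; exact this
    push_cast
    rw [show ((m : ℂ) + 1 + 1) = (m : ℂ) + 2 by ring]
    field_simp [hω, h2]
    ring

lemma R2 {ω : ℂ} (hω : ω ≠ 0) {Pk : ℕ → ℕ → Polynomial ℂ}
    (hmonic : ∀ k n, (Pk k n).Monic ∧ (Pk k n).natDegree = n)
    (hrec : ∀ k n : ℕ, Pk (k + 1) n = ((n : ℂ) + 1)⁻¹ • Dw ω (Pk k (n + 1))) :
    ∀ k n : ℕ, ((n : ℂ) + 1) * sub2 (Pk (k + 1)) n
      = ((n : ℂ) - 1) * sub2 (Pk k) (n + 1)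
        + ((n : ℂ) * ((n : ℂ) - 1) / 2) * ω * sub1 (Pk k) (n + 1)
        + (((n : ℂ) + 1) * (n : ℂ) * ((n : ℂ) - 1) / 6) * ω ^ 2 := by
  intro k n
  match n with
  | 0 => norm_num [sub2, sub1]
  | 1 => norm_num [sub2, sub1]
  | m + 2 =>
    have hs : sub2 (Pk (k + 1)) (m + 2) = (Pk (k + 1) (m + 2)).coeff m := by simp [sub2]
    have hs2' : sub2 (Pk k) (m + 3) = (Pk k (m + 3)).coeff (m + 1) := by simp [sub2]
    have hs1' : sub1 (Pk k) (m + 3) = (Pk k (m + 3)).coeff (m + 2) := by simp [sub1]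
    have htop : (Pk k (m + 3)).coeff (m + 3) = 1 := by
      have := (hmonic k (m + 3)).1.coeff_natDegree
      rwa [(hmonic k (m + 3)).2] at this
    have hc1 : ((m + 1).choose m : ℂ) = (m : ℂ) + 1 := by
      rw [Nat.choose_succ_self_right]; push_cast; ring
    have hc2 : ((m + 2).choose m : ℂ) = ((m : ℂ) + 2) * ((m : ℂ) + 1) / 2 := by
      have hsym : (m + 2).choose m = (m + 2).choose 2 := by
        rw [← Nat.choose_symm (show 2 ≤ m + 2 by omega), Nat.add_sub_cancel]
      rw [hsym, eq_div_iff (two_ne_zero)]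
      exact choose2C m
    have hc3 : ((m + 3).choose m : ℂ)
        = ((m : ℂ) + 3) * ((m : ℂ) + 2) * ((m : ℂ) + 1) / 6 := by
      have hsym : (m + 3).choose m = (m + 3).choose 3 := by
        rw [← Nat.choose_symm (show 3 ≤ m + 3 by omega), Nat.add_sub_cancel]
      rw [hsym, eq_div_iff (by norm_num : (6 : ℂ) ≠ 0)]
      exact choose3C m
    rw [hs, hrec k (m + 2), coeff_smul,
      dw_coeff ω hω _ m 3 (by rw [(hmonic k (m + 2 + 1)).2])]
    rw [Finset.sum_range_succ, Finset.sum_range_succ, Finset.sum_range_succ,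
      Finset.sum_range_succ, Finset.sum_range_zero]
    simp only [show m + 2 + 1 = m + 3 by omega, show 0 + m = m by omega,
      show 1 + m = m + 1 by omega, show 2 + m = m + 2 by omega,
      show 3 + m = m + 3 by omega,
      Nat.choose_self, Nat.cast_one, pow_zero, pow_one, smul_eq_mul]
    rw [hc1, hc2, hc3, htop, hs2', hs1']
    have h3 : ((m : ℂ) + 3) ≠ 0 := by
      have : ((m + 3 : ℕ) : ℂ) ≠ 0 := Nat.cast_ne_zero.mpr (by omega)
      push_cast at this; exact this
    push_cast
    rw [show ((m : ℂ) + 2 + 1) = (m : ℂ) + 3 by ring]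
    field_simp [hω, h3]
    ring

lemma L1 {ω : ℂ} (hω : ω ≠ 0) {Pk : ℕ → ℕ → Polynomial ℂ}
    (hmonic : ∀ k n, (Pk k n).Monic ∧ (Pk k n).natDegree = n)
    (hrec : ∀ k n : ℕ, Pk (k + 1) n = ((n : ℂ) + 1)⁻¹ • Dw ω (Pk k (n + 1))) :
    ∀ k n : ℕ, ((n : ℂ) + (k : ℂ)) * sub1 (Pk k) n
      = (n : ℂ) * sub1 (Pk 0) (n + k)
        + (n : ℂ) * ((n : ℂ) + (k : ℂ)) * (k : ℂ) * ω / 2 := by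
  intro k
  induction k with
  | zero => intro n; simp
  | succ k IH =>
    intro n
    have hR := R1 hω hmonic hrec k n
    have hI := IH (n + 1)
    rw [show n + 1 + k = n + (k + 1) by omega] at hI
    push_cast at hI hR ⊢
    have hne : ((n : ℂ) + 1) ≠ 0 := Nat.cast_add_one_ne_zero n
    apply mul_left_cancel₀ hne
    linear_combination ((n : ℂ) + (k : ℂ) + 1) * hR + (n : ℂ) * hI

lemma L2 {ω : ℂ} (hω : ω ≠ 0) {Pk : ℕ → ℕ → Polynomial ℂ}
    (hmonic : ∀ k n, (Pk k n).Monic ∧ (Pk k n).natDegree = n)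
    (hrec : ∀ k n : ℕ, Pk (k + 1) n = ((n : ℂ) + 1)⁻¹ • Dw ω (Pk k (n + 1))) :
    ∀ k n : ℕ, ((n : ℂ) + (k : ℂ)) * ((n : ℂ) + (k : ℂ) - 1) * sub2 (Pk k) n
      = (n : ℂ) * ((n : ℂ) - 1) *
          ( sub2 (Pk 0) (n + k)
            + ((n : ℂ) + (k : ℂ) - 1) * (k : ℂ) * (ω / 2) * sub1 (Pk 0) (n + k)
            + ((n : ℂ) + (k : ℂ)) * ((n : ℂ) + (k : ℂ) - 1)
              * ((k : ℂ) * (3 * (k : ℂ) + 1) / 24) * ω ^ 2 ) := by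
  intro k
  induction k with
  | zero => intro n; simp
  | succ k IH =>
    intro n
    have hR2 := R2 hω hmonic hrec k n
    have hI := IH (n + 1)
    have hL1 := L1 hω hmonic hrec k (n + 1)
    rw [show n + 1 + k = n + (k + 1) by omega] at hI hL1
    push_cast at hI hR2 hL1 ⊢
    have hne : ((n : ℂ) + 1) ≠ 0 := Nat.cast_add_one_ne_zero n
    apply mul_left_cancel₀ hne
    linear_combination ((n : ℂ) + (k : ℂ) + 1) * ((n : ℂ) + (k : ℂ)) * hR2
      + ((n : ℂ) - 1) * hI
      + ((n : ℂ) + (k : ℂ)) * (n : ℂ) * ((n : ℂ) - 1) * (ω / 2) * hL1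

lemma bval {ω : ℂ} (hω : ω ≠ 0) {Pk : ℕ → ℕ → Polynomial ℂ}
    (hmonic : ∀ k n, (Pk k n).Monic ∧ (Pk k n).natDegree = n)
    (hrec : ∀ k n : ℕ, Pk (k + 1) n = ((n : ℂ) + 1)⁻¹ • Dw ω (Pk k (n + 1)))
    (k n : ℕ) (h : 1 ≤ n + k) :
    sub1 (Pk k) n = ((n : ℂ) * sub1 (Pk 0) (n + k)
        + (n : ℂ) * ((n : ℂ) + (k : ℂ)) * (k : ℂ) * ω / 2) / ((n : ℂ) + (k : ℂ)) := by
  have hD : ((n : ℂ) + (k : ℂ)) ≠ 0 := by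
    have : ((n + k : ℕ) : ℂ) ≠ 0 := Nat.cast_ne_zero.mpr (by omega)
    push_cast at this; exact this
  rw [eq_div_iff hD]
  linear_combination L1 hω hmonic hrec k n

lemma cval {ω : ℂ} (hω : ω ≠ 0) {Pk : ℕ → ℕ → Polynomial ℂ}
    (hmonic : ∀ k n, (Pk k n).Monic ∧ (Pk k n).natDegree = n)
    (hrec : ∀ k n : ℕ, Pk (k + 1) n = ((n : ℂ) + 1)⁻¹ • Dw ω (Pk k (n + 1)))
    (k n : ℕ) (h : 2 ≤ n + k) :
    sub2 (Pk k) n = ((n : ℂ) * ((n : ℂ) - 1) *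
        ( sub2 (Pk 0) (n + k)
          + ((n : ℂ) + (k : ℂ) - 1) * (k : ℂ) * (ω / 2) * sub1 (Pk 0) (n + k)
          + ((n : ℂ) + (k : ℂ)) * ((n : ℂ) + (k : ℂ) - 1)
            * ((k : ℂ) * (3 * (k : ℂ) + 1) / 24) * ω ^ 2 ))
      / (((n : ℂ) + (k : ℂ)) * ((n : ℂ) + (k : ℂ) - 1)) := by
  have hD1 : ((n : ℂ) + (k : ℂ)) ≠ 0 := by
    have : ((n + k : ℕ) : ℂ) ≠ 0 := Nat.cast_ne_zero.mpr (by omega)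
    push_cast at this; exact this
  have hD2 : ((n : ℂ) + (k : ℂ) - 1) ≠ 0 := by
    have : ((n + k - 1 : ℕ) : ℂ) ≠ 0 := Nat.cast_ne_zero.mpr (by omega)
    rw [Nat.cast_sub (by omega)] at this
    push_cast at this; exact this
  rw [eq_div_iff (mul_ne_zero hD1 hD2)]
  linear_combination L2 hω hmonic hrec k n

lemma Bred {ω : ℂ} (hω : ω ≠ 0) {Pk : ℕ → ℕ → Polynomial ℂ}
    (hmonic : ∀ k n, (Pk k n).Monic ∧ (Pk k n).natDegree = n)
    (hrec : ∀ k n : ℕ, Pk (k + 1) n = ((n : ℂ) + 1)⁻¹ • Dw ω (Pk k (n + 1)))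
    {βk γk : ℕ → ℕ → ℂ} (hTTR : ∀ k, TTR (Pk k) (βk k) (γk k)) :
    ∀ j n : ℕ, βk (j + 1) n - βk j (n + 1) = βk 1 (n + j) - βk 0 (n + j + 1) := by
  intro j n
  have hm : ∀ k, MonicPS (Pk k) := fun k => hmonic k
  have βe : ∀ k m, βk k m = sub1 (Pk k) m - sub1 (Pk k) (m + 1) :=
    fun k => beta_eq (hm k) (hTTR k)
  rw [βe (j + 1) n, βe j (n + 1), βe 1 (n + j), βe 0 (n + j + 1)]
  rw [bval hω hmonic hrec (j + 1) n (by omega),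
    bval hω hmonic hrec (j + 1) (n + 1) (by omega),
    bval hω hmonic hrec j (n + 1) (by omega),
    bval hω hmonic hrec j (n + 2) (by omega),
    bval hω hmonic hrec 1 (n + j) (by omega),
    bval hω hmonic hrec 1 (n + j + 1) (by omega)]
  simp only [show n + (j + 1) = n + j + 1 by omega, show n + 1 + (j + 1) = n + j + 2 by omega,
    show n + 1 + j = n + j + 1 by omega, show n + 2 + j = n + j + 2 by omega,
    show n + j + 1 + 1 = n + j + 2 by omega]
  have hD1 : ((n : ℂ) + (j : ℂ) + 1) ≠ 0 := by
    have := Nat.cast_add_one_ne_zero (R := ℂ) (n + j); push_cast at this; exact this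
  have hD2 : ((n : ℂ) + (j : ℂ) + 2) ≠ 0 := by
    have := Nat.cast_add_one_ne_zero (R := ℂ) (n + j + 1); push_cast at this
    rw [show (n : ℂ) + (j : ℂ) + 2 = (n : ℂ) + (j : ℂ) + 1 + 1 by ring]; exact this
  have hD3 : ((2:ℂ) + (n:ℂ)*2 + (j:ℂ)*2) ≠ 0 := by
    have := mul_ne_zero (two_ne_zero (α := ℂ)) hD1
    rw [show (2:ℂ) * ((n:ℂ)+(j:ℂ)+1) = 2 + (n:ℂ)*2 + (j:ℂ)*2 by ring] at this
    exact this
  have hD4 : ((4:ℂ) + (n:ℂ)*2 + (j:ℂ)*2) ≠ 0 := by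
    have := mul_ne_zero (two_ne_zero (α := ℂ)) hD2
    rw [show (2:ℂ) * ((n:ℂ)+(j:ℂ)+2) = 4 + (n:ℂ)*2 + (j:ℂ)*2 by ring] at this
    exact this
  push_cast
  rw [show (n:ℂ) + ((j:ℂ) + 1) = (n:ℂ) + (j:ℂ) + 1 by ring,
    show (n:ℂ) + 1 + ((j:ℂ) + 1) = (n:ℂ) + (j:ℂ) + 2 by ring,
    show (n:ℂ) + 1 + (j:ℂ) = (n:ℂ) + (j:ℂ) + 1 by ring,
    show (n:ℂ) + 2 + (j:ℂ) = (n:ℂ) + (j:ℂ) + 2 by ring,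
    show (n:ℂ) + (j:ℂ) + 1 + 1 = (n:ℂ) + (j:ℂ) + 2 by ring]
  field_simp [hD1, hD2]
  ring

set_option maxHeartbeats 1000000 in
/-- Closed form for `γk k (m+1)` in terms of level-0 data, multiplied out. -/
lemma gval {ω : ℂ} (hω : ω ≠ 0) {Pk : ℕ → ℕ → Polynomial ℂ}
    (hmonic : ∀ k n, (Pk k n).Monic ∧ (Pk k n).natDegree = n)
    (hrec : ∀ k n : ℕ, Pk (k + 1) n = ((n : ℂ) + 1)⁻¹ • Dw ω (Pk k (n + 1)))
    {βk γk : ℕ → ℕ → ℂ} (hTTR : ∀ k, TTR (Pk k) (βk k) (γk k))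
    (k m : ℕ) :
    ((m : ℂ) + (k : ℂ) + 1) ^ 2 * ((m : ℂ) + (k : ℂ)) * ((m : ℂ) + (k : ℂ) + 2)
        * γk k (m + 1)
      = ((m : ℂ) + 1) * (m : ℂ) *
          (sub2 (Pk 0) (m + k + 1) + ((m : ℂ) + (k : ℂ)) * (k : ℂ) * (ω / 2) * sub1 (Pk 0) (m + k + 1)
            + ((m : ℂ) + (k : ℂ) + 1) * ((m : ℂ) + (k : ℂ)) * ((k : ℂ) * (3 * (k : ℂ) + 1) / 24) * ω ^ 2)
          * ((m : ℂ) + (k : ℂ) + 1) * ((m : ℂ) + (k : ℂ) + 2)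
        - ((m : ℂ) + 2) * ((m : ℂ) + 1) *
          (sub2 (Pk 0) (m + k + 2) + ((m : ℂ) + (k : ℂ) + 1) * (k : ℂ) * (ω / 2) * sub1 (Pk 0) (m + k + 2)
            + ((m : ℂ) + (k : ℂ) + 2) * ((m : ℂ) + (k : ℂ) + 1) * ((k : ℂ) * (3 * (k : ℂ) + 1) / 24) * ω ^ 2)
          * ((m : ℂ) + (k : ℂ)) * ((m : ℂ) + (k : ℂ) + 1)
        - ((((m : ℂ) + 1) * sub1 (Pk 0) (m + k + 1) + ((m : ℂ) + 1) * ((m : ℂ) + (k : ℂ) + 1) * (k : ℂ) * ω / 2) * ((m : ℂ) + (k : ℂ) + 2)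
            - (((m : ℂ) + 2) * sub1 (Pk 0) (m + k + 2) + ((m : ℂ) + 2) * ((m : ℂ) + (k : ℂ) + 2) * (k : ℂ) * ω / 2) * ((m : ℂ) + (k : ℂ) + 1))
          * (((m : ℂ) + 1) * sub1 (Pk 0) (m + k + 1) + ((m : ℂ) + 1) * ((m : ℂ) + (k : ℂ) + 1) * (k : ℂ) * ω / 2)
          * ((m : ℂ) + (k : ℂ)) := by
  have hm : ∀ k, MonicPS (Pk k) := fun k => hmonic k
  have βe : ∀ k m, βk k m = sub1 (Pk k) m - sub1 (Pk k) (m + 1) :=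
    fun k => beta_eq (hm k) (hTTR k)
  have γe := gamma_eq (hm k) (hTTR k) m
  rw [γe, βe k (m + 1)]
  simp only [show m + 1 + 1 = m + 2 by omega]
  have e1 := L1 hω hmonic hrec k (m + 1)
  have e2 := L1 hω hmonic hrec k (m + 2)
  have f1 := L2 hω hmonic hrec k (m + 1)
  have f2 := L2 hω hmonic hrec k (m + 2)
  simp only [show m + 1 + k = m + k + 1 by omega,
    show m + 2 + k = m + k + 2 by omega] at e1 e2 f1 f2
  push_cast at e1 e2 f1 f2 ⊢
  linear_combination
    (((m:ℂ) + (k:ℂ) + 1) * ((m:ℂ) + (k:ℂ) + 2)) * f1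
    - (((m:ℂ) + (k:ℂ) + 1) * ((m:ℂ) + (k:ℂ))) * f2
    - ((m:ℂ) + (k:ℂ)) * ((m:ℂ) + (k:ℂ) + 2) *
        (((m:ℂ) + (k:ℂ) + 1) * sub1 (Pk k) (m + 1)
          + (((m:ℂ) + 1) * sub1 (Pk 0) (m + k + 1)
              + ((m:ℂ) + 1) * ((m:ℂ) + (k:ℂ) + 1) * (k:ℂ) * ω / 2)) * e1
    + ((m:ℂ) + (k:ℂ)) * ((m:ℂ) + (k:ℂ) + 1) * ((m:ℂ) + (k:ℂ) + 2) * sub1 (Pk k) (m + 2) * e1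
    + ((m:ℂ) + (k:ℂ)) * ((m:ℂ) + (k:ℂ) + 1) *
        (((m:ℂ) + 1) * sub1 (Pk 0) (m + k + 1)
          + ((m:ℂ) + 1) * ((m:ℂ) + (k:ℂ) + 1) * (k:ℂ) * ω / 2) * e2

set_option maxHeartbeats 1600000 in
lemma Gred {ω : ℂ} (hω : ω ≠ 0) {Pk : ℕ → ℕ → Polynomial ℂ}
    (hmonic : ∀ k n, (Pk k n).Monic ∧ (Pk k n).natDegree = n)
    (hrec : ∀ k n : ℕ, Pk (k + 1) n = ((n : ℂ) + 1)⁻¹ • Dw ω (Pk k (n + 1)))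
    {βk γk : ℕ → ℕ → ℂ} (hTTR : ∀ k, TTR (Pk k) (βk k) (γk k)) (j n : ℕ) :
    ((n : ℂ) + 2) * ((n : ℂ) + (j : ℂ) + 1) * ((n : ℂ) + (j : ℂ) + 2) * γk (j + 1) (n + 1)
        - ((n : ℂ) + 1) * ((n : ℂ) + (j : ℂ) + 1) * ((n : ℂ) + (j : ℂ) + 2) * γk j (n + 2)
      = ((n : ℂ) + 1) * ((n : ℂ) + 2) * ((n : ℂ) + (j : ℂ) + 2) * γk 1 (n + j + 1)
        - ((n : ℂ) + 1) * ((n : ℂ) + 2) * ((n : ℂ) + (j : ℂ) + 1) * γk 0 (n + j + 2) := by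
  have gA := gval hω hmonic hrec hTTR (j + 1) n
  have gB := gval hω hmonic hrec hTTR j (n + 1)
  have gC := gval hω hmonic hrec hTTR 1 (n + j)
  have gD := gval hω hmonic hrec hTTR 0 (n + j + 1)
  simp only [show n + (j + 1) + 1 = n + j + 2 by omega,
    show n + (j + 1) + 2 = n + j + 3 by omega] at gA
  simp only [show n + 1 + j + 1 = n + j + 2 by omega,
    show n + 1 + j + 2 = n + j + 3 by omega, show n + 1 + 1 = n + 2 by omega] at gB
  simp only [show n + j + 1 + 1 = n + j + 2 by omega,
    show n + j + 1 + 2 = n + j + 3 by omega] at gC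
  simp only [show n + j + 1 + 0 + 1 = n + j + 2 by omega,
    show n + j + 1 + 0 + 2 = n + j + 3 by omega,
    show n + j + 1 + 1 = n + j + 2 by omega] at gD
  push_cast at gA gB gC gD
  have hD1 : ((n : ℂ) + (j : ℂ) + 1) ≠ 0 := by
    have := Nat.cast_add_one_ne_zero (R := ℂ) (n + j); push_cast at this; exact this
  have hD2 : ((n : ℂ) + (j : ℂ) + 2) ≠ 0 := by
    have := Nat.cast_add_one_ne_zero (R := ℂ) (n + j + 1); push_cast at this
    rw [show (n : ℂ) + (j : ℂ) + 2 = (n : ℂ) + (j : ℂ) + 1 + 1 by ring]; exact this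
  have hD3 : ((n : ℂ) + (j : ℂ) + 3) ≠ 0 := by
    have := Nat.cast_add_one_ne_zero (R := ℂ) (n + j + 2); push_cast at this
    rw [show (n : ℂ) + (j : ℂ) + 3 = (n : ℂ) + (j : ℂ) + 2 + 1 by ring]; exact this
  have hQ : (((n : ℂ) + (j : ℂ) + 2) ^ 2 * ((n : ℂ) + (j : ℂ) + 1) * ((n : ℂ) + (j : ℂ) + 3)) ≠ 0 :=
    mul_ne_zero (mul_ne_zero (pow_ne_zero 2 hD2) hD1) hD3
  apply mul_left_cancel₀ hQ
  linear_combination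
    (((n : ℂ) + 2) * ((n : ℂ) + (j : ℂ) + 1) * ((n : ℂ) + (j : ℂ) + 2)) * gA
    - (((n : ℂ) + 1) * ((n : ℂ) + (j : ℂ) + 1) * ((n : ℂ) + (j : ℂ) + 2)) * gB
    - (((n : ℂ) + 1) * ((n : ℂ) + 2) * ((n : ℂ) + (j : ℂ) + 2)) * gC
    + (((n : ℂ) + 1) * ((n : ℂ) + 2) * ((n : ℂ) + (j : ℂ) + 1)) * gD


theorem higher_order_structure_relation_coefficients
    (ω : ℂ) (hω : ω ≠ 0) (Pk : ℕ → ℕ → Polynomial ℂ)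
    (hmonic : ∀ k, MonicPS (Pk k))
    (hrec : ∀ k n : ℕ, Pk (k + 1) n = ((n : ℂ) + 1)⁻¹ • Dw ω (Pk k (n + 1)))
    (βk γk : ℕ → ℕ → ℂ)
    (hTTR : ∀ k, TTR (Pk k) (βk k) (γk k))
    (hγ : ∀ m : ℕ, 1 ≤ m → γk 0 m ≠ 0)
    (δ θ : ℕ → ℂ)
    (hδ : ∀ n : ℕ, δ n = βk 1 n - βk 0 (n + 1))
    (hθ : ∀ n : ℕ, 1 ≤ n →
        θ n = ((n : ℂ) + 1) * γk 1 n / ((n : ℂ) * γk 0 (n + 1)))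
    (α1 α0 : ℕ → ℕ → ℂ)
    (hα1 : ∀ k n : ℕ, 1 ≤ k →
        α1 k n = ((n : ℂ) + 1) * (βk (k - 1) (n + 1) - βk k n - ω))
    (hα0 : ∀ k n : ℕ, 1 ≤ k →
        α0 k n = ((n : ℂ) + 1) * γk (k - 1) (n + 2) - ((n : ℂ) + 2) * γk k (n + 1)) :
    ∀ k n : ℕ, 1 ≤ k →
      α1 k n = -((n : ℂ) + 1) * (δ (n + k - 1) + ω) ∧
      α0 k n = (((n : ℂ) + 1) * ((n : ℂ) + 2) / ((n : ℂ) + (k : ℂ) + 1))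
        * γk 0 (n + k + 1) * (1 - θ (n + k)) := by
  intro k n hk
  obtain ⟨j, rfl⟩ : ∃ j, k = j + 1 := ⟨k - 1, by omega⟩
  have hmon : ∀ k n, (Pk k n).Monic ∧ (Pk k n).natDegree = n := fun k n => hmonic k n
  constructor
  · have hB := Bred hω hmon hrec hTTR j n
    have h1 := hα1 (j + 1) n (by omega)
    simp only [Nat.add_sub_cancel] at h1
    rw [h1, show n + (j + 1) - 1 = n + j by omega, hδ (n + j)]
    push_cast
    linear_combination -((n:ℂ)+1) * hB
  · have hG := Gred hω hmon hrec hTTR j n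
    have h0 := hα0 (j + 1) n (by omega)
    simp only [Nat.add_sub_cancel] at h0
    rw [h0, show n + (j + 1) = n + j + 1 by omega,
      show n + j + 1 + 1 = n + j + 2 by omega,
      hθ (n + j + 1) (by omega)]
    have hγ0 : γk 0 (n + j + 2) ≠ 0 := hγ (n + j + 2) (by omega)
    push_cast
    rw [show (n:ℂ) + ((j:ℂ) + 1) + 1 = (n:ℂ) + (j:ℂ) + 2 by ring,
      show (n:ℂ) + (j:ℂ) + 1 + 1 = (n:ℂ) + (j:ℂ) + 2 by ring]
    simp only [show n + j + 1 + 1 = n + j + 2 by omega]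
    have hD1 : ((n : ℂ) + (j : ℂ) + 1) ≠ 0 := by
      have := Nat.cast_add_one_ne_zero (R := ℂ) (n + j); push_cast at this; exact this
    have hD2 : ((n : ℂ) + (j : ℂ) + 2) ≠ 0 := by
      have := Nat.cast_add_one_ne_zero (R := ℂ) (n + j + 1); push_cast at this
      rw [show (n : ℂ) + (j : ℂ) + 2 = (n : ℂ) + (j : ℂ) + 1 + 1 by ring]; exact this
    have key : ((n:ℂ) + 1) * ((n:ℂ) + 2) / ((n:ℂ) + (j:ℂ) + 2) * γk 0 (n + j + 2) *
          (1 - ((n:ℂ) + (j:ℂ) + 2) * γk 1 (n + j + 1) / (((n:ℂ) + (j:ℂ) + 1) * γk 0 (n + j + 2)))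
        = ((n:ℂ) + 1) * ((n:ℂ) + 2) *
            (((n:ℂ) + (j:ℂ) + 1) * γk 0 (n + j + 2) - ((n:ℂ) + (j:ℂ) + 2) * γk 1 (n + j + 1))
          / (((n:ℂ) + (j:ℂ) + 1) * ((n:ℂ) + (j:ℂ) + 2)) := by
      field_simp
    rw [key, eq_div_iff (mul_ne_zero hD1 hD2)]
    linear_combination -hG
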